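/- Let L ⊆ ℝ^n be a linear subspace, P : ℝ^n → L the orthogonal projection onto L, μ > 0, and z, u ∈ Δ_{n-1}. Suppose (1/2)‖Pz‖₂² + (1/2)‖Pu‖₂² − min_{w ∈ Δ_{n-1}} ⟨Pu, w⟩ ≤ μ, and suppose Pu is not componentwise strictly positive. Then ‖(Pz)^+‖₁ ≤ √n · ‖Pz‖₂ ≤ √(2nμ) ≤ n√(2nμ) · ‖z‖_∞. In particular, if μ ≤ 1/(8n³) then ‖(Pz)^+‖₁ ≤ (1/2)‖z‖_∞. -/

import Mathlib

noncomputable section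
open scoped RealInnerProductSpace

/-- The ℓ∞ norm of a vector in ℝⁿ. -/
def linf {n : ℕ} (x : EuclideanSpace ℝ (Fin n)) : ℝ := ⨆ j, |x j|

/-- The ℓ₁ norm of a vector in ℝⁿ. -/
def l1 {n : ℕ} (x : EuclideanSpace ℝ (Fin n)) : ℝ := ∑ j, |x j|

/-- The ℓ₁ norm of the componentwise positive part `v⁺` of a vector `v ∈ ℝⁿ`. -/
def l1pos {n : ℕ} (v : EuclideanSpace ℝ (Fin n)) : ℝ := ∑ j, max (v j) 0

/-- Membership in the standard simplex `Δ_{n-1} = {x ∈ ℝⁿ : x ≥ 0, ‖x‖₁ = 1}`. -/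
def inSimplex {n : ℕ} (x : EuclideanSpace ℝ (Fin n)) : Prop :=
  (∀ j, 0 ≤ x j) ∧ l1 x = 1

/-- The orthogonal projection onto `L`, viewed as a map into the ambient space. -/
def proj {n : ℕ} (L : Submodule ℝ (EuclideanSpace ℝ (Fin n)))
    (x : EuclideanSpace ℝ (Fin n)) : EuclideanSpace ℝ (Fin n) :=
  (L.orthogonalProjection x : EuclideanSpace ℝ (Fin n))

/-- ℓ₁–ℓ₂ comparison. -/
lemma l1_le_sqrt_mul_norm {n : ℕ} (v : EuclideanSpace ℝ (Fin n)) :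
    l1 v ≤ Real.sqrt n * ‖v‖ := by
  have h1 : (l1 v) ^ 2 ≤ (n : ℝ) * ∑ j, |v j| ^ 2 := by
    simpa [l1] using sq_sum_le_card_mul_sum_sq (s := Finset.univ) (f := fun j => |v j|)
  have h2 : ‖v‖ ^ 2 = ∑ j, |v j| ^ 2 := by
    rw [EuclideanSpace.norm_eq, Real.sq_sqrt]
    · simp [sq_abs]
    · positivity
  have hl1 : 0 ≤ l1 v := Finset.sum_nonneg fun j _ => abs_nonneg _
  have : (l1 v) ^ 2 ≤ (Real.sqrt n * ‖v‖) ^ 2 := by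
    rw [mul_pow, Real.sq_sqrt (Nat.cast_nonneg n), h2]; exact h1
  calc l1 v = Real.sqrt ((l1 v) ^ 2) := (Real.sqrt_sq hl1).symm
    _ ≤ Real.sqrt ((Real.sqrt n * ‖v‖) ^ 2) := Real.sqrt_le_sqrt this
    _ = Real.sqrt n * ‖v‖ := Real.sqrt_sq (by positivity)

/-- Euclidean norm is at most ℓ₁ norm. -/
lemma norm_le_l1 {n : ℕ} (v : EuclideanSpace ℝ (Fin n)) : ‖v‖ ≤ l1 v := by
  have hl1 : 0 ≤ l1 v := Finset.sum_nonneg fun j _ => abs_nonneg _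
  have h2 : ‖v‖ ^ 2 = ∑ j, |v j| ^ 2 := by
    rw [EuclideanSpace.norm_eq, Real.sq_sqrt]
    · simp [sq_abs]
    · positivity
  have h3 : ∑ j, |v j| ^ 2 ≤ (l1 v) ^ 2 :=
    Finset.sum_sq_le_sq_sum_of_nonneg fun j _ => abs_nonneg _
  nlinarith [norm_nonneg v]

theorem basic_procedure_bound {n : ℕ} (L : Submodule ℝ (EuclideanSpace ℝ (Fin n)))
    (μ : ℝ) (hμ : 0 < μ) (z u : EuclideanSpace ℝ (Fin n))
    (hz : inSimplex z) (hu : inSimplex u)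
    (hgap : (1 / 2) * ‖proj L z‖ ^ 2 + (1 / 2) * ‖proj L u‖ ^ 2 -
      sInf {t | ∃ w, inSimplex w ∧ t = ⟪proj L u, w⟫} ≤ μ)
    (hnot : ¬ ∀ j, 0 < proj L u j) :
    l1pos (proj L z) ≤ Real.sqrt n * ‖proj L z‖ ∧
      Real.sqrt n * ‖proj L z‖ ≤ Real.sqrt (2 * n * μ) ∧
      Real.sqrt (2 * n * μ) ≤ n * Real.sqrt (2 * n * μ) * linf z ∧
      (μ ≤ 1 / (8 * n ^ 3) → l1pos (proj L z) ≤ (1 / 2) * linf z) := by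
  have hn : 0 < n := by
    by_contra h
    have : n = 0 := by omega
    subst this
    simpa [l1] using hz.2
  have hn' : (0:ℝ) < n := by exact_mod_cast hn
  haveI : Nonempty (Fin n) := ⟨⟨0, hn⟩⟩
  set v := proj L z with hv
  set pu := proj L u with hpu
  clear_value v pu
  -- Step 1: l1pos ≤ √n ‖v‖
  have step1 : l1pos v ≤ Real.sqrt n * ‖v‖ := by
    refine le_trans ?_ (l1_le_sqrt_mul_norm v)
    exact Finset.sum_le_sum fun j _ => max_le (le_abs_self _) (abs_nonneg _)
  -- some j with pu j ≤ 0
  obtain ⟨j, hj⟩ : ∃ j, pu j ≤ 0 := by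
    push_neg at hnot; exact hnot.imp fun j h => h
  -- the set is bounded below and contains pu j
  set S : Set ℝ := {t | ∃ w, inSimplex w ∧ t = ⟪pu, w⟫} with hS
  have hbdd : BddBelow S := by
    refine ⟨-‖pu‖, fun t ht => ?_⟩
    obtain ⟨w, hw, rfl⟩ := ht
    have h1 : |⟪pu, w⟫| ≤ ‖pu‖ * ‖w‖ := abs_real_inner_le_norm pu w
    have h2 : ‖w‖ ≤ 1 := by
      have := norm_le_l1 w; rw [hw.2] at this; exact this
    nlinarith [abs_nonneg ⟪pu, w⟫, neg_abs_le ⟪pu, w⟫, norm_nonneg pu, norm_nonneg w]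
  have hmem : pu j ∈ S := by
    refine ⟨EuclideanSpace.single j (1:ℝ), ⟨?_, ?_⟩, ?_⟩
    · intro i
      by_cases h : i = j <;> simp [EuclideanSpace.single_apply, h]
    · simp [l1, EuclideanSpace.single_apply, apply_ite abs, Finset.sum_ite_eq']
    · simp [EuclideanSpace.inner_single_right]
  have hsinf : sInf S ≤ 0 := le_trans (csInf_le hbdd hmem) hj
  -- Step 2: ‖v‖² ≤ 2μ hence √n ‖v‖ ≤ √(2 n μ)
  have hv2 : ‖v‖ ^ 2 ≤ 2 * μ := by
    have hpu2 : 0 ≤ ‖pu‖ ^ 2 := sq_nonneg _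
    nlinarith [hgap]
  have step2 : Real.sqrt n * ‖v‖ ≤ Real.sqrt (2 * n * μ) := by
    have h1 : Real.sqrt n * ‖v‖ = Real.sqrt (n * ‖v‖ ^ 2) := by
      rw [Real.sqrt_mul (Nat.cast_nonneg n), Real.sqrt_sq (norm_nonneg _)]
    rw [h1]
    apply Real.sqrt_le_sqrt
    nlinarith
  -- linf z ≥ 1/n
  have hlinf : 1 ≤ n * linf z := by
    have hb : BddAbove (Set.range fun j => |z j|) := (Set.finite_range _).bddAbove
    have h1 : ∀ j, |z j| ≤ linf z := fun j => le_ciSup hb j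
    have h2 : l1 z ≤ ∑ _j : Fin n, linf z := Finset.sum_le_sum fun j _ => h1 j
    rw [hz.2] at h2
    simpa using h2
  have hlinf0 : 0 ≤ linf z := by nlinarith
  -- Step 3
  have hsqrt0 : 0 ≤ Real.sqrt (2 * n * μ) := Real.sqrt_nonneg _
  have step3 : Real.sqrt (2 * n * μ) ≤ n * Real.sqrt (2 * n * μ) * linf z := by
    nlinarith
  refine ⟨step1, step2, step3, fun hμ' => ?_⟩
  -- Step 4
  have h4 : Real.sqrt (2 * n * μ) ≤ 1 / (2 * n) := by
    have h1 : 2 * (n:ℝ) * μ ≤ (1 / (2 * n)) ^ 2 := by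
      have heq : (1 / (2 * (n:ℝ))) ^ 2 = 2 * n * (1 / (8 * n ^ 3)) := by
        field_simp; ring
      rw [heq]
      have : (0:ℝ) ≤ 2 * n := by positivity
      exact mul_le_mul_of_nonneg_left hμ' this
    calc Real.sqrt (2 * n * μ) ≤ Real.sqrt ((1 / (2 * n)) ^ 2) := Real.sqrt_le_sqrt h1
      _ = 1 / (2 * n) := Real.sqrt_sq (by positivity)
  have h5 : 1 / (2 * (n:ℝ)) ≤ (1 / 2) * linf z := by
    rw [div_le_iff₀ (by positivity)]
    nlinarith
  exact le_trans (le_trans step1 step2) (le_trans h4 h5)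

end
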